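/- Let F(x) = Ax ⊕ b be an affine bijection of F₂ⁿ. Then F preserves Hamming weight mod 4 (|F(x)| ≡ |x| (mod 4) for all x) if and only if |b| ≡ 0 (mod 4), the columns vᵢ = Aeᵢ satisfy |vᵢ| + 2(vᵢ·b) ≡ 1 (mod 4) for all i, and vᵢ·vⱼ ≡ 0 (mod 2) for all i ≠ j. -/

import Mathlib

def wt {n : ℕ} (v : Fin n → ZMod 2) : ℕ :=
  (Finset.univ.filter fun i => v i = 1).card

def ip {n : ℕ} (u v : Fin n → ZMod 2) : ℕ :=
  (Finset.univ.filter fun i => u i = 1 ∧ v i = 1).card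

lemma val_eq_ite (a : ZMod 2) : a.val = if a = 1 then 1 else 0 := by revert a; decide

lemma wt_eq_sum {n : ℕ} (v : Fin n → ZMod 2) : wt v = ∑ i, (v i).val := by
  unfold wt
  rw [Finset.card_filter]
  exact Finset.sum_congr rfl fun i _ => (val_eq_ite (v i)).symm

lemma ip_eq_sum {n : ℕ} (u v : Fin n → ZMod 2) :
    ip u v = ∑ i, (u i).val * (v i).val := by
  unfold ip
  rw [Finset.card_filter]
  refine Finset.sum_congr rfl fun i _ => ?_
  have : ∀ a b : ZMod 2, (if a = 1 ∧ b = 1 then 1 else 0) = a.val * b.val := by decide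
  exact this (u i) (v i)

lemma ip_comm {n : ℕ} (u v : Fin n → ZMod 2) : ip u v = ip v u := by
  rw [ip_eq_sum, ip_eq_sum]
  exact Finset.sum_congr rfl fun i _ => mul_comm _ _

lemma wt_add_eq {n : ℕ} (u v : Fin n → ZMod 2) :
    wt (u + v) + 2 * ip u v = wt u + wt v := by
  rw [wt_eq_sum, wt_eq_sum, wt_eq_sum, ip_eq_sum, Finset.mul_sum, ← Finset.sum_add_distrib,
    ← Finset.sum_add_distrib]
  refine Finset.sum_congr rfl fun i _ => ?_
  have : ∀ a b : ZMod 2, (a + b).val + 2 * (a.val * b.val) = a.val + b.val := by decide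
  exact this (u i) (v i)

lemma ip_cast {n : ℕ} (u v : Fin n → ZMod 2) :
    ((ip u v : ℕ) : ZMod 2) = dotProduct u v := by
  rw [ip_eq_sum]
  push_cast
  refine Finset.sum_congr rfl fun i _ => ?_
  have : ∀ a b : ZMod 2, ((a.val : ℕ) : ZMod 2) * ((b.val : ℕ) : ZMod 2) = a * b := by decide
  exact this (u i) (v i)

lemma ip_add_left {n : ℕ} (u v w : Fin n → ZMod 2) :
    ∃ t, ip (u + v) w + 2 * t = ip u w + ip v w := by
  refine ⟨∑ i, (u i).val * (v i).val * (w i).val, ?_⟩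
  rw [ip_eq_sum, ip_eq_sum, ip_eq_sum, Finset.mul_sum, ← Finset.sum_add_distrib,
    ← Finset.sum_add_distrib]
  refine Finset.sum_congr rfl fun i _ => ?_
  have : ∀ a b c : ZMod 2,
      (a + b).val * c.val + 2 * (a.val * b.val * c.val) = a.val * c.val + b.val * c.val := by
    decide
  exact this (u i) (v i) (w i)

lemma wt_single {n : ℕ} (i : Fin n) : wt (Pi.single i 1 : Fin n → ZMod 2) = 1 := by
  rw [wt_eq_sum]
  have : ∀ j, ((Pi.single i 1 : Fin n → ZMod 2) j).val = if j = i then 1 else 0 := by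
    intro j
    rcases eq_or_ne j i with h | h
    · subst h; simp; rfl
    · simp [h, Pi.single_apply]
  simp [this]

lemma ip_single_single {n : ℕ} {i j : Fin n} (h : i ≠ j) :
    ip (Pi.single i 1 : Fin n → ZMod 2) (Pi.single j 1) = 0 := by
  rw [ip_eq_sum]
  refine Finset.sum_eq_zero fun k _ => ?_
  rcases eq_or_ne k i with hk | hk
  · subst hk
    have : (Pi.single j 1 : Fin n → ZMod 2) k = 0 := Pi.single_eq_of_ne h 1
    simp [this]
  · have : (Pi.single i 1 : Fin n → ZMod 2) k = 0 := Pi.single_eq_of_ne hk 1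
    simp [this]

lemma mulVec_single_old {m n : Type*} [Fintype n] [DecidableEq n] {R : Type*}
    [NonUnitalNonAssocSemiring R] (M : Matrix m n R) (j : n) (x : R) :
    M.mulVec (Pi.single j x) = fun i => M i j * x :=
  funext fun _ => dotProduct_single _ _ _

lemma zmod2_cases (a : ZMod 2) : a = 0 ∨ a = 1 := by revert a; decide

theorem stmt_10 (n : ℕ) (A : Matrix (Fin n) (Fin n) (ZMod 2)) (b : Fin n → ZMod 2)
    (hA : IsUnit A) :
    (∀ x : Fin n → ZMod 2, wt (A.mulVec x + b) ≡ wt x [MOD 4]) ↔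
      (wt b ≡ 0 [MOD 4] ∧
        (∀ i, wt (fun r => A r i) + 2 * ip (fun r => A r i) b ≡ 1 [MOD 4]) ∧
        ∀ i j, i ≠ j → ip (fun r => A r i) (fun r => A r j) ≡ 0 [MOD 2]) := by
  have hwt0 : wt (0 : Fin n → ZMod 2) = 0 := by simp [wt_eq_sum]
  constructor
  · intro h
    have h0 := h 0
    rw [Matrix.mulVec_zero, zero_add, hwt0] at h0
    refine ⟨h0, ?_, ?_⟩
    · intro i
      have hi := h (Pi.single i 1)
      rw [mulVec_single_old, wt_single] at hi
      simp only [mul_one] at hi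
      have E := wt_add_eq (fun r => A r i) b
      unfold Nat.ModEq at *
      omega
    · intro i j hne
      have hx := h (Pi.single i 1 + Pi.single j 1)
      rw [Matrix.mulVec_add, mulVec_single_old, mulVec_single_old] at hx
      simp only [mul_one] at hx
      have hwt2 : wt (Pi.single i 1 + Pi.single j 1 : Fin n → ZMod 2) = 2 := by
        have E := wt_add_eq (Pi.single i 1 : Fin n → ZMod 2) (Pi.single j 1)
        rw [ip_single_single hne, wt_single, wt_single] at E
        omega
      rw [hwt2] at hx
      have hi := h (Pi.single i 1)
      rw [mulVec_single_old, wt_single] at hi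
      simp only [mul_one] at hi
      have hj := h (Pi.single j 1)
      rw [mulVec_single_old, wt_single] at hj
      simp only [mul_one] at hj
      have E1 := wt_add_eq ((fun r => A r i) + fun r => A r j) b
      have E2 := wt_add_eq (fun r => A r i) (fun r => A r j)
      have Ei := wt_add_eq (fun r => A r i) b
      have Ej := wt_add_eq (fun r => A r j) b
      obtain ⟨t, E3⟩ := ip_add_left (fun r => A r i) (fun r => A r j) b
      unfold Nat.ModEq at *
      omega
  · rintro ⟨hb, hcol, hpair⟩ x
    have key : ∀ S : Finset (Fin n),
        wt (A.mulVec (fun i => if i ∈ S then 1 else 0) + b) ≡ S.card [MOD 4] := by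
      intro S
      induction S using Finset.induction_on with
      | empty =>
          have : (fun i => if i ∈ (∅ : Finset (Fin n)) then (1 : ZMod 2) else 0) = 0 := by
            funext i; simp
          rw [this, Matrix.mulVec_zero, zero_add]
          simpa using hb
      | @insert k S hk ih =>
          have hfun : (fun i => if i ∈ insert k S then (1 : ZMod 2) else 0)
              = (fun i => if i ∈ S then 1 else 0) + Pi.single k 1 := by
            funext i
            rcases eq_or_ne i k with hik | hik
            · subst hik
              simp [hk]
            · simp [Finset.mem_insert, hik, Pi.single_eq_of_ne hik]
          rw [hfun, Matrix.mulVec_add, mulVec_single_old,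
            Finset.card_insert_of_notMem hk]
          simp only [mul_one]
          rw [add_right_comm]
          have E := wt_add_eq (A.mulVec (fun i => if i ∈ S then 1 else 0) + b)
            (fun r => A r k)
          have hc := hcol k
          have hdz : dotProduct (A.mulVec fun i => if i ∈ S then 1 else 0)
              (fun r => A r k) = 0 := by
            simp only [Matrix.mulVec, dotProduct, Finset.sum_mul]
            rw [Finset.sum_comm]
            refine Finset.sum_eq_zero fun i _ => ?_
            by_cases hiS : i ∈ S
            · have hne : i ≠ k := by rintro rfl; exact hk hiS
              have hz : (∑ r, A r i * A r k) = 0 := by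
                have hp := hpair i k hne
                have := ip_cast (fun r => A r i) (fun r => A r k)
                rw [Nat.ModEq] at hp
                have hcast : ((ip (fun r => A r i) (fun r => A r k) : ℕ) : ZMod 2) = 0 :=
                  (ZMod.natCast_eq_zero_iff _ _).mpr (Nat.dvd_of_mod_eq_zero hp)
                rw [this] at hcast
                simpa [dotProduct] using hcast
              calc (∑ r, A r i * (if i ∈ S then (1 : ZMod 2) else 0) * A r k)
                  = (∑ r, A r i * A r k) * (if i ∈ S then (1 : ZMod 2) else 0) := by
                    rw [Finset.sum_mul]; exact Finset.sum_congr rfl fun r _ => by ring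
                _ = 0 := by rw [hz, zero_mul]
            · simp [hiS]
          have hp2 : ip (A.mulVec (fun i => if i ∈ S then 1 else 0) + b)
              (fun r => A r k) ≡ ip (fun r => A r k) b [MOD 2] := by
            rw [← ZMod.natCast_eq_natCast_iff]
            rw [ip_cast, ip_cast, add_dotProduct, hdz, zero_add,
              dotProduct_comm]
          unfold Nat.ModEq at *
          omega
    have hkey := key (Finset.univ.filter fun i => x i = 1)
    have hx : (fun i => if i ∈ Finset.univ.filter (fun i => x i = 1) then (1 : ZMod 2) else 0)
        = x := by
      funext i
      simp only [Finset.mem_filter, Finset.mem_univ, true_and]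
      rcases zmod2_cases (x i) with h1 | h1 <;> simp [h1]
    rw [hx] at hkey
    exact hkey
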